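/- In the free tree monoid FT(X) on a totally ordered finite alphabet X, the rewriting system consisting of the rules y·u·y → y·u, for y ∈ X and u any reduced word over letters strictly smaller than y (including u empty), is confluent and length-reducing, and presents FT(X). -/

import Mathlib

/-- A word is *reduced* for the free tree monoid if no rewriting rule applies to any factor;
equivalently (by induction on length), it contains no factor `y ++ w ++ y` where all letters of
`w` are strictly smaller than `y`. -/
def FTReduced {X : Type*} [LinearOrder X] (u : List X) : Prop :=
  ¬ ∃ (v w z : List X) (y : X), (∀ a ∈ w, a < y) ∧ u = v ++ [y] ++ w ++ [y] ++ z

/-- One step of the completed rewriting system for the free tree monoid: rewrite a factor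
`y ++ w ++ y` to `y ++ w`, where `w` is a reduced word over letters strictly smaller
than `y` (possibly empty). -/
def FTStep {X : Type*} [LinearOrder X] (u v : List X) : Prop :=
  ∃ (p q w : List X) (y : X), (∀ a ∈ w, a < y) ∧ FTReduced w ∧
    u = p ++ [y] ++ w ++ [y] ++ q ∧ v = p ++ [y] ++ w ++ q

/-- One step of the defining rewriting system of the free tree monoid `FT(X)`:
`x·x → x` and `y·x·y → y·x` whenever `x < y`, applied inside any context. -/
def FTBaseStep {X : Type*} [LinearOrder X] (u v : List X) : Prop :=
  (∃ (p q : List X) (x : X), u = p ++ [x, x] ++ q ∧ v = p ++ [x] ++ q) ∨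
  (∃ (p q : List X) (x y : X), x < y ∧ u = p ++ [y, x, y] ++ q ∧ v = p ++ [y, x] ++ q)

open Relation

section FTProofs
variable {X : Type*} [LinearOrder X]

lemma ftReduced_nil : FTReduced ([] : List X) := by
  rintro ⟨v, w, z, y, -, h⟩
  apply_fun List.length at h; simp at h

lemma ftReduced_singleton (x : X) : FTReduced [x] := by
  rintro ⟨v, w, z, y, -, h⟩
  apply_fun List.length at h; simp at h; omega

lemma ftstep_length {u v : List X} (h : FTStep u v) : v.length < u.length := by
  obtain ⟨p, q, w, y, -, -, hu, hv⟩ := h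
  subst hu hv; simp

lemma ftstep_context (p q : List X) {u v : List X} (h : FTStep u v) :
    FTStep (p ++ u ++ q) (p ++ v ++ q) := by
  obtain ⟨p', q', w, y, h1, h2, hu, hv⟩ := h
  exact ⟨p ++ p', q' ++ q, w, y, h1, h2, by simp [hu], by simp [hv]⟩

lemma rtg_context (p q : List X) {u v : List X} (h : ReflTransGen FTStep u v) :
    ReflTransGen FTStep (p ++ u ++ q) (p ++ v ++ q) := by
  induction h with
  | refl => exact .refl
  | tail _ h ih => exact ih.tail (ftstep_context p q h)

lemma ftstep_mem {u v : List X} (h : FTStep u v) : ∀ a ∈ v, a ∈ u := by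
  obtain ⟨p, q, w, y, -, -, hu, hv⟩ := h
  subst hu hv; intro a ha; simp at ha ⊢; tauto

lemma rtg_mem {u v : List X} (h : ReflTransGen FTStep u v) : ∀ a ∈ v, a ∈ u := by
  induction h with
  | refl => exact fun a ha => ha
  | tail _ h ih => exact fun a ha => ih a (ftstep_mem h a ha)

/-- From any factor `[y] ++ w ++ [y]` with letters of `w` below `y`, one can find such a
factor with `w` moreover reduced; by strong induction on the length of `w`. -/
lemma step_of_factor : ∀ (n : ℕ) (v w z : List X) (y : X), w.length ≤ n →
    (∀ a ∈ w, a < y) →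
    ∃ u', FTStep (v ++ [y] ++ w ++ [y] ++ z) u' := by
  intro n
  induction n using Nat.strong_induction_on with
  | _ n ih =>
    intro v w z y hlen hlt
    by_cases hw : FTReduced w
    · exact ⟨_, v, z, w, y, hlt, hw, rfl, rfl⟩
    · rw [FTReduced, not_not] at hw
      obtain ⟨v2, w2, z2, y2, hlt2, hw2⟩ := hw
      have hl2 : w2.length < n := by
        apply_fun List.length at hw2; simp at hw2; omega
      obtain ⟨u', hu'⟩ := ih w2.length hl2 (v ++ [y] ++ v2) w2 (z2 ++ [y] ++ z) y2
        le_rfl hlt2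
      subst hw2
      refine ⟨u', ?_⟩
      have heq : v ++ [y] ++ (v2 ++ [y2] ++ w2 ++ [y2] ++ z2) ++ [y] ++ z
          = v ++ [y] ++ v2 ++ [y2] ++ w2 ++ [y2] ++ (z2 ++ [y] ++ z) := by simp
      rw [heq]; exact hu'


lemma exists_rtg_reduced (u : List X) :
    ∃ v, ReflTransGen FTStep u v ∧ FTReduced v := by
  generalize hn : u.length = n
  induction n using Nat.strong_induction_on generalizing u with
  | _ n ih =>
    by_cases hu : FTReduced u
    · exact ⟨u, .refl, hu⟩
    · rw [FTReduced, not_not] at hu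
      obtain ⟨v, w, z, y, hlt, hw⟩ := hu
      obtain ⟨u', hu'⟩ := step_of_factor w.length v w z y le_rfl hlt
      rw [← hw] at hu'
      obtain ⟨v', hv', hred⟩ := ih u'.length (by rw [← hn]; exact ftstep_length hu') u' rfl
      exact ⟨v', .head hu' hv', hred⟩

lemma split_of_le {a b c d : List X} (h : a ++ b = c ++ d) (hl : a.length ≤ c.length) :
    ∃ t, c = a ++ t ∧ b = t ++ d := by
  rcases List.append_eq_append_iff.1 h with ⟨t, h1, h2⟩ | ⟨t, h1, h2⟩
  · exact ⟨t, h1, h2⟩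
  · have ht : t = [] := by
      have hl1 : t.length = 0 := by
        apply_fun List.length at h1; simp at h1; omega
      simpa using hl1
    subst ht; simp at h1 h2
    exact ⟨[], by simp [h1], by simp [h2]⟩

lemma adj_join (p q w1 w2 : List X) (y : X) (h1 : ∀ a ∈ w1, a < y) (h2 : ∀ a ∈ w2, a < y)
    (hr1 : FTReduced w1) :
    ∃ z, ReflTransGen FTStep (p ++ [y] ++ w1 ++ w2 ++ [y] ++ q) z ∧
         ReflTransGen FTStep (p ++ [y] ++ w1 ++ [y] ++ w2 ++ q) z := by
  obtain ⟨wb, hwb, hwbr⟩ := exists_rtg_reduced (w1 ++ w2)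
  have hmem := rtg_mem hwb
  have hlt : ∀ a ∈ wb, a < y := fun a ha => by
    rcases List.mem_append.1 (hmem a ha) with h | h
    exacts [h1 a h, h2 a h]
  refine ⟨p ++ [y] ++ wb ++ q, ?_, ?_⟩
  · have c1 : ReflTransGen FTStep ((p ++ [y]) ++ (w1 ++ w2) ++ ([y] ++ q))
        ((p ++ [y]) ++ wb ++ ([y] ++ q)) := rtg_context _ _ hwb
    have c2 : ReflTransGen FTStep (p ++ [y] ++ w1 ++ w2 ++ [y] ++ q)
        (p ++ [y] ++ wb ++ [y] ++ q) := by simpa [List.append_assoc] using c1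
    exact c2.tail ⟨p, q, wb, y, hlt, hwbr, rfl, rfl⟩
  · have s1 : ReflTransGen FTStep (p ++ [y] ++ w1 ++ [y] ++ w2 ++ q)
        ((p ++ [y]) ++ (w1 ++ w2) ++ q) :=
      .single ⟨p, w2 ++ q, w1, y, h1, hr1, by simp, by simp⟩
    exact s1.trans (by simpa [List.append_assoc] using rtg_context (p ++ [y]) q hwb)

lemma join_aux {p1 q1 w1 p2 q2 w2 : List X} {y1 y2 : X}
    (hlt1 : ∀ a ∈ w1, a < y1) (hr1 : FTReduced w1)
    (hlt2 : ∀ a ∈ w2, a < y2) (hr2 : FTReduced w2)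
    (heq : p1 ++ [y1] ++ w1 ++ [y1] ++ q1 = p2 ++ [y2] ++ w2 ++ [y2] ++ q2)
    (hp : p1.length ≤ p2.length) :
    ∃ z, ReflTransGen FTStep (p1 ++ [y1] ++ w1 ++ q1) z ∧
         ReflTransGen FTStep (p2 ++ [y2] ++ w2 ++ q2) z := by
  have heq' : p1 ++ ([y1] ++ (w1 ++ ([y1] ++ q1))) = p2 ++ ([y2] ++ (w2 ++ ([y2] ++ q2))) := by
    simpa [List.append_assoc] using heq
  obtain ⟨t, hp2, hrest⟩ := split_of_le heq' hp
  match t with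
  | [] =>
    simp at hp2 hrest
    obtain ⟨rfl, hrest⟩ := hrest
    subst hp2
    rcases le_total w1.length w2.length with hw | hw
    · obtain ⟨s, hs, hq⟩ := split_of_le hrest hw
      match s with
      | [] =>
        simp at hs hq
        subst hs hq
        exact ⟨_, .refl, .refl⟩
      | a :: s' =>
        simp at hq
        obtain ⟨rfl, -⟩ := hq
        exact absurd (hlt2 y1 (by simp [hs])) (lt_irrefl y1)
    · obtain ⟨s, hs, hq⟩ := split_of_le hrest.symm hw
      match s with
      | [] =>
        simp at hs hq
        subst hs hq
        exact ⟨_, .refl, .refl⟩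
      | a :: s' =>
        simp at hq
        obtain ⟨rfl, -⟩ := hq
        exact absurd (hlt1 y1 (by simp [hs])) (lt_irrefl y1)
  | c :: t' =>
    simp at hrest
    obtain ⟨rfl, hrest⟩ := hrest
    rcases le_total w1.length t'.length with hw | hw
    · obtain ⟨s, hs, hq⟩ := split_of_le hrest hw
      match s with
      | [] =>
        simp at hs hq
        obtain ⟨rfl, rfl⟩ := hq
        subst hs hp2
        obtain ⟨z, hz1, hz2⟩ := adj_join p1 q2 t' w2 y1 hlt1 hlt2 hr1
        exact ⟨z, by simpa [List.append_assoc] using hz1,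
          by simpa [List.append_assoc] using hz2⟩
      | a :: s'' =>
        simp at hq
        obtain ⟨rfl, rfl⟩ := hq
        subst hs hp2
        refine ⟨p1 ++ [y1] ++ w1 ++ s'' ++ [y2] ++ w2 ++ q2, ?_, ?_⟩
        · exact .single ⟨p1 ++ [y1] ++ w1 ++ s'', q2, w2, y2, hlt2, hr2, by simp, by simp⟩
        · exact .single ⟨p1, s'' ++ [y2] ++ w2 ++ q2, w1, y1, hlt1, hr1, by simp, by simp⟩
    · obtain ⟨s, hs, hq⟩ := split_of_le hrest.symm hw
      match s with
      | [] =>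
        simp at hs hq
        obtain ⟨rfl, rfl⟩ := hq
        subst hs hp2
        obtain ⟨z, hz1, hz2⟩ := adj_join p1 q2 w1 w2 y2 hlt1 hlt2 hr1
        exact ⟨z, by simpa [List.append_assoc] using hz1,
          by simpa [List.append_assoc] using hz2⟩
      | a :: s'' =>
        simp at hq
        obtain ⟨rfl, hq2⟩ := hq
        have hy21 : y2 < y1 := hlt1 y2 (by simp [hs])
        rcases le_total w2.length s''.length with hw2 | hw2
        · obtain ⟨r, hr, hq'⟩ := split_of_le hq2 hw2
          match r with
          | [] =>
            simp at hq'
            obtain ⟨rfl, -⟩ := hq'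
            exact absurd hy21 (lt_irrefl _)
          | b :: r' =>
            simp at hq'
            obtain ⟨rfl, -⟩ := hq'
            exact absurd hr1 (fun h => h ⟨t', w2, r', y2, hlt2, by simp [hs, hr]⟩)
        · obtain ⟨r, hr, hq'⟩ := split_of_le hq2.symm hw2
          match r with
          | [] =>
            simp at hq'
            obtain ⟨rfl, -⟩ := hq'
            exact absurd hy21 (lt_irrefl _)
          | b :: r' =>
            simp at hq'
            obtain ⟨rfl, -⟩ := hq'
            have : y1 < y2 := hlt2 y1 (by simp [hr])
            exact absurd (this.trans hy21) (lt_irrefl y1)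

lemma local_confl {u v w : List X} (h1 : FTStep u v) (h2 : FTStep u w) :
    ∃ z, ReflTransGen FTStep v z ∧ ReflTransGen FTStep w z := by
  obtain ⟨p1, q1, w1, y1, hlt1, hr1, hu1, rfl⟩ := h1
  obtain ⟨p2, q2, w2, y2, hlt2, hr2, hu2, rfl⟩ := h2
  subst hu1
  rcases le_total p1.length p2.length with h | h
  · exact join_aux hlt1 hr1 hlt2 hr2 hu2 h
  · obtain ⟨z, hz1, hz2⟩ := join_aux hlt2 hr2 hlt1 hr1 hu2.symm h
    exact ⟨z, hz2, hz1⟩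

lemma ft_confluent_aux : ∀ (n : ℕ) (u v w : List X), u.length ≤ n →
    ReflTransGen FTStep u v → ReflTransGen FTStep u w →
    ∃ z, ReflTransGen FTStep v z ∧ ReflTransGen FTStep w z := by
  intro n
  induction n using Nat.strong_induction_on with
  | _ n ih =>
    intro u v w hn hv hw
    rcases hv.cases_head with rfl | ⟨v1, hv1, hv1'⟩
    · exact ⟨w, hw, .refl⟩
    rcases hw.cases_head with rfl | ⟨w1, hw1, hw1'⟩
    · exact ⟨v, .refl, hv⟩
    obtain ⟨d, hd1, hd2⟩ := local_confl hv1 hw1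
    have hlv : v1.length < n := lt_of_lt_of_le (ftstep_length hv1) hn
    obtain ⟨e, he1, he2⟩ := ih v1.length hlv v1 v d le_rfl hv1' hd1
    have hlw : w1.length < n := lt_of_lt_of_le (ftstep_length hw1) hn
    obtain ⟨z, hz1, hz2⟩ := ih w1.length hlw w1 w e le_rfl hw1' (hd2.trans he2)
    exact ⟨z, he1.trans hz2, hz1⟩

lemma base_context (p q : List X) {u v : List X} (h : FTBaseStep u v) :
    FTBaseStep (p ++ u ++ q) (p ++ v ++ q) := by
  rcases h with ⟨p', q', x, rfl, rfl⟩ | ⟨p', q', x, y, hxy, rfl, rfl⟩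
  · exact Or.inl ⟨p ++ p', q' ++ q, x, by simp, by simp⟩
  · exact Or.inr ⟨p ++ p', q' ++ q, x, y, hxy, by simp, by simp⟩

lemma eqv_base_context (p q : List X) {u v : List X} (h : EqvGen FTBaseStep u v) :
    EqvGen FTBaseStep (p ++ u ++ q) (p ++ v ++ q) := by
  induction h with
  | rel a b h => exact .rel _ _ (base_context p q h)
  | refl a => exact .refl _
  | symm a b _ ih => exact .symm _ _ ih
  | trans a b c _ _ ih1 ih2 => exact .trans _ _ _ ih1 ih2

lemma key_eqv (w : List X) (y : X) (h : ∀ a ∈ w, a < y) :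
    EqvGen FTBaseStep ([y] ++ w ++ [y]) ([y] ++ w) := by
  induction w with
  | nil => exact .rel _ _ (Or.inl ⟨[], [], y, by simp, by simp⟩)
  | cons x w' ih =>
    have hx : x < y := h x (by simp)
    have ih' := ih (fun a ha => h a (by simp [ha]))
    have e1 : EqvGen FTBaseStep ([y, x, y] ++ w' ++ [y]) ([y] ++ (x :: w') ++ [y]) :=
      .rel _ _ (Or.inr ⟨[], w' ++ [y], x, y, hx, by simp, by simp⟩)
    have e2 : EqvGen FTBaseStep ([y, x, y] ++ w' ++ [y]) ([y, x, y] ++ w') := by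
      have := eqv_base_context [y, x] [] ih'
      simpa using this
    have e3 : EqvGen FTBaseStep ([y, x, y] ++ w') ([y] ++ (x :: w')) :=
      .rel _ _ (Or.inr ⟨[], w', x, y, hx, by simp, by simp⟩)
    exact .trans _ _ _ (.trans _ _ _ (.symm _ _ e1) e2) e3

lemma step_to_eqv_base {u v : List X} (h : FTStep u v) : EqvGen FTBaseStep u v := by
  obtain ⟨p, q, w, y, hlt, -, rfl, rfl⟩ := h
  have := eqv_base_context p q (key_eqv w y hlt)
  simpa [List.append_assoc] using this

lemma base_to_step {u v : List X} (h : FTBaseStep u v) : FTStep u v := by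
  rcases h with ⟨p, q, x, rfl, rfl⟩ | ⟨p, q, x, y, hxy, rfl, rfl⟩
  · exact ⟨p, q, [], x, by simp, ftReduced_nil, by simp, by simp⟩
  · refine ⟨p, q, [x], y, ?_, ftReduced_singleton x, by simp, by simp⟩
    intro a ha; simp at ha; subst ha; exact hxy

lemma eqv_iff (u v : List X) : EqvGen FTStep u v ↔ EqvGen FTBaseStep u v := by
  constructor
  · intro h
    induction h with
    | rel a b h => exact step_to_eqv_base h
    | refl a => exact .refl _
    | symm a b _ ih => exact .symm _ _ ih
    | trans a b c _ _ ih1 ih2 => exact .trans _ _ _ ih1 ih2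
  · intro h
    induction h with
    | rel a b h => exact .rel _ _ (base_to_step h)
    | refl a => exact .refl _
    | symm a b _ ih => exact .symm _ _ ih
    | trans a b c _ _ ih1 ih2 => exact .trans _ _ _ ih1 ih2

end FTProofs

/-- In the free tree monoid `FT(X)` on a totally ordered finite alphabet `X`, the rewriting
system consisting of the rules `y·u·y → y·u` (for `y ∈ X` and `u` a reduced word over letters
strictly smaller than `y`) is length-reducing and confluent, and it presents `FT(X)`: it
generates the same congruence on words as the defining relations `x² = x` and
`y·x·y = y·x` (`x < y`). -/
theorem freeTreeMonoid_rewriting_confluent {X : Type*} [LinearOrder X] [Fintype X] :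
    (∀ u v : List X, FTStep u v → v.length < u.length) ∧
    (∀ u v w : List X, Relation.ReflTransGen FTStep u v → Relation.ReflTransGen FTStep u w →
      ∃ z : List X, Relation.ReflTransGen FTStep v z ∧ Relation.ReflTransGen FTStep w z) ∧
    (∀ u v : List X, Relation.EqvGen FTStep u v ↔ Relation.EqvGen FTBaseStep u v) := by
  refine ⟨fun u v h => ftstep_length h, fun u v w hv hw =>
    ft_confluent_aux u.length u v w le_rfl hv hw, eqv_iff⟩
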